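/- Let B = Σ_{n≥0} (Σ_{π ∈ S_n(132)} t^{bdes(π)}) x^n, regarded as a formal power series in x with coefficients in ℤ[t]. Then, in (ℤ[t])[[x]], the series B satisfies the algebraic identity ( (1 − 2(1−t)x + (1−t)(1−2t)x²) − 2tx(1 − (1−t)x)·B )² = 1 − 4x + 6(1−t)x² − 4(1−t)²x³ + (1−t)²x⁴. -/

import Mathlib

open scoped Classical

/-- A permutation `π` of `Fin n` contains the pattern `σ` (a permutation of `Fin m`)
if some subsequence of the one-line notation of `π` standardizes to `σ`. -/
def Contains {n m : ℕ} (π : Equiv.Perm (Fin n)) (σ : Equiv.Perm (Fin m)) : Prop :=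
  ∃ f : Fin m → Fin n, StrictMono f ∧ ∀ a b : Fin m, σ a < σ b ↔ π (f a) < π (f b)

/-- `π` avoids the pattern `σ`. -/
def Avoids {n m : ℕ} (π : Equiv.Perm (Fin n)) (σ : Equiv.Perm (Fin m)) : Prop :=
  ¬ Contains π σ

/-- The pattern 123 (identity, in 0-indexed one-line notation `[0,1,2]`). -/
def perm123 : Equiv.Perm (Fin 3) := 1

/-- The pattern 132 (0-indexed one-line notation `[0,2,1]`). -/
def perm132 : Equiv.Perm (Fin 3) := ⟨![0, 2, 1], ![0, 2, 1], by decide, by decide⟩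

/-- The pattern 213 (0-indexed one-line notation `[1,0,2]`). -/
def perm213 : Equiv.Perm (Fin 3) := ⟨![1, 0, 2], ![1, 0, 2], by decide, by decide⟩

/-- The pattern 231 (0-indexed one-line notation `[1,2,0]`). -/
def perm231 : Equiv.Perm (Fin 3) := ⟨![1, 2, 0], ![2, 0, 1], by decide, by decide⟩

/-- The pattern 312 (0-indexed one-line notation `[2,0,1]`). -/
def perm312 : Equiv.Perm (Fin 3) := ⟨![2, 0, 1], ![1, 2, 0], by decide, by decide⟩

/-- The pattern 321 (0-indexed one-line notation `[2,1,0]`). -/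
def perm321 : Equiv.Perm (Fin 3) := ⟨![2, 1, 0], ![2, 1, 0], by decide, by decide⟩

/-- The number of big descents of `π`: 0-indexed positions `k` with `π k > π (k+1) + 1`. -/
def bdes {n : ℕ} (π : Equiv.Perm (Fin n)) : ℕ :=
  ((Finset.range n).filter fun k =>
    ∃ hk : k + 1 < n, (π ⟨k + 1, hk⟩ : ℕ) + 1 < (π ⟨k, Nat.lt_of_succ_lt hk⟩ : ℕ)).card

/-- The generating function `B = Σ_n Σ_{π ∈ S_n(132)} t^{bdes π} x^n`, as a formal power
series in `x` with coefficients in `ℤ[t]`. -/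
noncomputable def B132 : PowerSeries (Polynomial ℤ) :=
  PowerSeries.mk fun n =>
    ∑ π ∈ Finset.univ.filter (fun π : Equiv.Perm (Fin n) => Avoids π perm132),
      Polynomial.X ^ bdes π

lemma contains132_iff {n : ℕ} (π : Equiv.Perm (Fin n)) :
    Contains π perm132 ↔ ∃ i j l : Fin n, i < j ∧ j < l ∧ π i < π l ∧ π l < π j := by
  constructor
  · rintro ⟨f, hf, h⟩
    refine ⟨f 0, f 1, f 2, hf (by decide), hf (by decide), ?_, ?_⟩
    · exact (h 0 2).mp (by decide)
    · exact (h 2 1).mp (by decide)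
  · rintro ⟨i, j, l, hij, hjl, h1, h2⟩
    refine ⟨![i, j, l], ?_, ?_⟩
    · intro a b hab
      fin_cases a <;> fin_cases b <;> simp_all <;> omega
    · intro a b
      fin_cases a <;> fin_cases b <;>
        simp [perm132, Matrix.cons_val_zero, Matrix.cons_val_one] <;>
        first
          | exact h1.trans h2 | exact (h1.trans h2).le
          | exact h1 | exact h1.le | exact h2 | exact h2.le

def glueFun {n k : ℕ} (hk : k ≤ n) (α : Equiv.Perm (Fin k)) (β : Equiv.Perm (Fin (n - k)))
    (i : Fin (n + 1)) : Fin (n + 1) :=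
  if h : (i : ℕ) < k then ⟨(α ⟨i, h⟩ : ℕ) + (n - k), by omega⟩
  else if h2 : (i : ℕ) = k then ⟨n, by omega⟩
  else ⟨(β ⟨(i : ℕ) - k - 1, by omega⟩ : ℕ), by
    have := (β ⟨(i : ℕ) - k - 1, by omega⟩).isLt; omega⟩

lemma glueFun_lt {n k : ℕ} (hk : k ≤ n) (α : Equiv.Perm (Fin k)) (β : Equiv.Perm (Fin (n - k)))
    {i : Fin (n + 1)} (h : (i : ℕ) < k) :
    (glueFun hk α β i : ℕ) = (α ⟨i, h⟩ : ℕ) + (n - k) := by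
  simp [glueFun, h]

lemma glueFun_eq {n k : ℕ} (hk : k ≤ n) (α : Equiv.Perm (Fin k)) (β : Equiv.Perm (Fin (n - k)))
    {i : Fin (n + 1)} (h : (i : ℕ) = k) :
    (glueFun hk α β i : ℕ) = n := by
  simp [glueFun, h]

lemma glueFun_gt {n k : ℕ} (hk : k ≤ n) (α : Equiv.Perm (Fin k)) (β : Equiv.Perm (Fin (n - k)))
    {i : Fin (n + 1)} (h : k < (i : ℕ)) (h' : (i : ℕ) - k - 1 < n - k) :
    (glueFun hk α β i : ℕ) = (β ⟨(i : ℕ) - k - 1, h'⟩ : ℕ) := by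
  have h1 : ¬ ((i : ℕ) < k) := by omega
  have h2 : ¬ ((i : ℕ) = k) := by omega
  simp [glueFun, h1, h2]

lemma glueFun_inj {n k : ℕ} (hk : k ≤ n) (α : Equiv.Perm (Fin k)) (β : Equiv.Perm (Fin (n - k))) :
    Function.Injective (glueFun hk α β) := by
  intro i j hij
  have hij' : (glueFun hk α β i : ℕ) = (glueFun hk α β j : ℕ) := by rw [hij]
  have hbi : ∀ m : Fin (n - k), (β m : ℕ) < n - k := fun m => (β m).isLt
  have hai : ∀ m : Fin k, (α m : ℕ) < k := fun m => (α m).isLt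
  rcases lt_trichotomy (i : ℕ) k with hi | hi | hi <;>
    rcases lt_trichotomy (j : ℕ) k with hj | hj | hj
  · rw [glueFun_lt hk α β hi, glueFun_lt hk α β hj] at hij'
    have : α ⟨i, hi⟩ = α ⟨j, hj⟩ := Fin.ext (by omega)
    have := α.injective this
    exact Fin.ext (by simpa [Fin.ext_iff] using this)
  · rw [glueFun_lt hk α β hi, glueFun_eq hk α β hj] at hij'
    have := hai ⟨i, hi⟩; omega
  · have hj' : (j : ℕ) - k - 1 < n - k := by have := j.isLt; omega
    rw [glueFun_lt hk α β hi, glueFun_gt hk α β hj hj'] at hij'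
    have := hbi ⟨(j : ℕ) - k - 1, hj'⟩; have := hai ⟨i, hi⟩; omega
  · rw [glueFun_eq hk α β hi, glueFun_lt hk α β hj] at hij'
    have := hai ⟨j, hj⟩; omega
  · exact Fin.ext (by omega)
  · have hj' : (j : ℕ) - k - 1 < n - k := by have := j.isLt; omega
    rw [glueFun_eq hk α β hi, glueFun_gt hk α β hj hj'] at hij'
    have := hbi ⟨(j : ℕ) - k - 1, hj'⟩; omega
  · have hi' : (i : ℕ) - k - 1 < n - k := by have := i.isLt; omega
    rw [glueFun_gt hk α β hi hi', glueFun_lt hk α β hj] at hij'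
    have := hbi ⟨(i : ℕ) - k - 1, hi'⟩; have := hai ⟨j, hj⟩; omega
  · have hi' : (i : ℕ) - k - 1 < n - k := by have := i.isLt; omega
    rw [glueFun_gt hk α β hi hi', glueFun_eq hk α β hj] at hij'
    have := hbi ⟨(i : ℕ) - k - 1, hi'⟩; omega
  · have hi' : (i : ℕ) - k - 1 < n - k := by have := i.isLt; omega
    have hj' : (j : ℕ) - k - 1 < n - k := by have := j.isLt; omega
    rw [glueFun_gt hk α β hi hi', glueFun_gt hk α β hj hj'] at hij'
    have : β ⟨(i : ℕ) - k - 1, hi'⟩ = β ⟨(j : ℕ) - k - 1, hj'⟩ := Fin.ext hij'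
    have := β.injective this
    exact Fin.ext (by simp [Fin.ext_iff] at this; omega)

noncomputable def glue {n k : ℕ} (hk : k ≤ n) (α : Equiv.Perm (Fin k))
    (β : Equiv.Perm (Fin (n - k))) : Equiv.Perm (Fin (n + 1)) :=
  Equiv.ofBijective _ (Finite.injective_iff_bijective.mp (glueFun_inj hk α β))

lemma glue_apply {n k : ℕ} (hk : k ≤ n) (α : Equiv.Perm (Fin k)) (β : Equiv.Perm (Fin (n - k)))
    (i : Fin (n + 1)) : glue hk α β i = glueFun hk α β i := rfl
lemma glue_contains_iff {n k : ℕ} (hk : k ≤ n) (α : Equiv.Perm (Fin k))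
    (β : Equiv.Perm (Fin (n - k))) :
    Contains (glue hk α β) perm132 ↔ (Contains α perm132 ∨ Contains β perm132) := by
  rw [contains132_iff]
  constructor
  · rintro ⟨i, j, l, hij, hjl, h1, h2⟩
    rw [Fin.lt_def] at hij hjl h1 h2
    simp only [glue_apply] at h1 h2
    have hvn : ∀ x : Fin (n + 1), (glueFun hk α β x : ℕ) ≤ n :=
      fun x => Nat.lt_succ_iff.mp (glueFun hk α β x).isLt
    by_cases hl : (l : ℕ) < k
    · left
      have hj : (j : ℕ) < k := lt_trans hjl hl
      have hi : (i : ℕ) < k := lt_trans hij hj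
      rw [contains132_iff]
      refine ⟨⟨i, hi⟩, ⟨j, hj⟩, ⟨l, hl⟩, Fin.mk_lt_mk.mpr hij, Fin.mk_lt_mk.mpr hjl, ?_, ?_⟩
      · rw [Fin.lt_def]
        rw [glueFun_lt hk α β hi, glueFun_lt hk α β hl] at h1; omega
      · rw [Fin.lt_def]
        rw [glueFun_lt hk α β hl, glueFun_lt hk α β hj] at h2; omega
    · by_cases hi : k < (i : ℕ)
      · right
        have hj : k < (j : ℕ) := lt_trans hi hij
        have hl' : k < (l : ℕ) := lt_trans hj hjl
        have pi' : (i : ℕ) - k - 1 < n - k := by have := i.isLt; omega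
        have pj : (j : ℕ) - k - 1 < n - k := by have := j.isLt; omega
        have pl : (l : ℕ) - k - 1 < n - k := by have := l.isLt; omega
        rw [contains132_iff]
        refine ⟨⟨(i : ℕ) - k - 1, pi'⟩, ⟨(j : ℕ) - k - 1, pj⟩, ⟨(l : ℕ) - k - 1, pl⟩,
          Fin.mk_lt_mk.mpr (by omega), Fin.mk_lt_mk.mpr (by omega), ?_, ?_⟩
        · rw [Fin.lt_def]
          rw [glueFun_gt hk α β hi pi', glueFun_gt hk α β hl' pl] at h1; omega
        · rw [Fin.lt_def]
          rw [glueFun_gt hk α β hl' pl, glueFun_gt hk α β hj pj] at h2; omega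
      · exfalso
        rcases lt_trichotomy (l : ℕ) k with h | h | h
        · exact hl h
        · rw [glueFun_eq hk α β h] at h2
          have := hvn j; omega
        · rcases lt_trichotomy (i : ℕ) k with h' | h' | h'
          · have pl : (l : ℕ) - k - 1 < n - k := by have := l.isLt; omega
            rw [glueFun_lt hk α β h', glueFun_gt hk α β h pl] at h1
            have := (β ⟨(l : ℕ) - k - 1, pl⟩).isLt; omega
          · rw [glueFun_eq hk α β h'] at h1
            have := hvn l; omega
          · exact hi h'
  · rintro (h | h)
    · obtain ⟨i, j, l, hij, hjl, h1, h2⟩ := (contains132_iff α).mp h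
      rw [Fin.lt_def] at hij hjl h1 h2
      have mki : ∀ x : Fin k, (x : ℕ) < n + 1 := fun x => by have := x.isLt; omega
      have key : ∀ x : Fin k,
          (glueFun hk α β ⟨(x : ℕ), mki x⟩ : ℕ) = (α x : ℕ) + (n - k) := by
        intro x
        rw [glueFun_lt hk α β (show ((⟨(x : ℕ), mki x⟩ : Fin (n + 1)) : ℕ) < k from x.isLt)]
      refine ⟨⟨i, mki i⟩, ⟨j, mki j⟩, ⟨l, mki l⟩, Fin.mk_lt_mk.mpr hij,
        Fin.mk_lt_mk.mpr hjl, ?_, ?_⟩ <;>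
      · rw [Fin.lt_def]
        simp only [glue_apply]
        rw [key, key]; omega
    · obtain ⟨i, j, l, hij, hjl, h1, h2⟩ := (contains132_iff β).mp h
      rw [Fin.lt_def] at hij hjl h1 h2
      have mk' : ∀ x : Fin (n - k), k + 1 + (x : ℕ) < n + 1 := fun x => by have := x.isLt; omega
      have key : ∀ x : Fin (n - k),
          (glueFun hk α β ⟨k + 1 + (x : ℕ), mk' x⟩ : ℕ) = (β x : ℕ) := by
        intro x
        have hgt : k < ((⟨k + 1 + (x : ℕ), mk' x⟩ : Fin (n + 1)) : ℕ) := by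
          show k < k + 1 + (x : ℕ); omega
        have hlt : ((⟨k + 1 + (x : ℕ), mk' x⟩ : Fin (n + 1)) : ℕ) - k - 1 < n - k := by
          show k + 1 + (x : ℕ) - k - 1 < n - k; have := x.isLt; omega
        rw [glueFun_gt hk α β hgt hlt]
        have he : (⟨((⟨k + 1 + (x : ℕ), mk' x⟩ : Fin (n + 1)) : ℕ) - k - 1, hlt⟩ : Fin (n - k)) = x :=
          Fin.ext (show k + 1 + (x : ℕ) - k - 1 = (x : ℕ) by omega)
        rw [he]
      refine ⟨⟨k + 1 + (i : ℕ), mk' i⟩, ⟨k + 1 + (j : ℕ), mk' j⟩, ⟨k + 1 + (l : ℕ), mk' l⟩,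
        Fin.mk_lt_mk.mpr (by omega), Fin.mk_lt_mk.mpr (by omega), ?_, ?_⟩ <;>
      · rw [Fin.lt_def]
        simp only [glue_apply]
        rw [key, key]; omega

def jnc (n k : ℕ) (β : Equiv.Perm (Fin (n - k))) : ℕ :=
  if h : k < n then (if (β ⟨0, Nat.sub_pos_of_lt h⟩ : ℕ) + 1 < n then 1 else 0) else 0

lemma glueFun_lt' {n k : ℕ} (hk : k ≤ n) (α : Equiv.Perm (Fin k)) (β : Equiv.Perm (Fin (n - k)))
    (i : ℕ) (hn : i < n + 1) (h : i < k) :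
    (glueFun hk α β ⟨i, hn⟩ : ℕ) = (α ⟨i, h⟩ : ℕ) + (n - k) :=
  glueFun_lt hk α β h

lemma glueFun_eq' {n k : ℕ} (hk : k ≤ n) (α : Equiv.Perm (Fin k)) (β : Equiv.Perm (Fin (n - k)))
    (i : ℕ) (hn : i < n + 1) (h : i = k) :
    (glueFun hk α β ⟨i, hn⟩ : ℕ) = n :=
  glueFun_eq hk α β h

lemma glueFun_gt' {n k : ℕ} (hk : k ≤ n) (α : Equiv.Perm (Fin k)) (β : Equiv.Perm (Fin (n - k)))
    (i j : ℕ) (hn : i < n + 1) (hj : j < n - k) (hij : i - k - 1 = j) (h : k < i) :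
    (glueFun hk α β ⟨i, hn⟩ : ℕ) = (β ⟨j, hj⟩ : ℕ) := by
  subst hij
  exact glueFun_gt hk α β h hj

lemma ite_exists_eq {c : Prop} (hc : c) (P : c → Prop) :
    (if (∃ h : c, P h) then 1 else 0 : ℕ) = if P hc then 1 else 0 := by
  congr 1
  exact propext ⟨fun ⟨_, p⟩ => p, fun p => ⟨hc, p⟩⟩

lemma ite_exists_false {c : Prop} (hc : ¬ c) (P : c → Prop) :
    (if (∃ h : c, P h) then 1 else 0 : ℕ) = 0 :=
  if_neg (by rintro ⟨h, _⟩; exact hc h)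

lemma my_sum_range_add {M : Type*} [AddCommMonoid M] (f : ℕ → M) (m n : ℕ) :
    ∑ i ∈ Finset.range (m + n), f i =
      ∑ i ∈ Finset.range m, f i + ∑ i ∈ Finset.range n, f (m + i) := by
  induction n with
  | zero => simp
  | succ n ih =>
    rw [← Nat.add_assoc, Finset.sum_range_succ, Finset.sum_range_succ, ih, add_assoc]

lemma bdes_eq_sum {n : ℕ} (π : Equiv.Perm (Fin n)) :
    bdes π = ∑ i ∈ Finset.range n,
      if (∃ hk : i + 1 < n, (π ⟨i + 1, hk⟩ : ℕ) + 1 < (π ⟨i, Nat.lt_of_succ_lt hk⟩ : ℕ))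
      then 1 else 0 := by
  rw [bdes, Finset.card_filter]

lemma bdes_glue {n k : ℕ} (hk : k ≤ n) (α : Equiv.Perm (Fin k)) (β : Equiv.Perm (Fin (n - k))) :
    bdes (glue hk α β) = bdes α + bdes β + jnc n k β := by
  have hsplit : n + 1 = k + 1 + (n - k) := by omega
  rw [bdes_eq_sum]
  simp only [glue_apply]
  rw [show Finset.range (n + 1) = Finset.range (k + 1 + (n - k)) by rw [← hsplit],
    my_sum_range_add, Finset.sum_range_succ]
  have Hα : (∑ i ∈ Finset.range k,
      if (∃ h : i + 1 < n + 1, (glueFun hk α β ⟨i + 1, h⟩ : ℕ) + 1 <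
        (glueFun hk α β ⟨i, Nat.lt_of_succ_lt h⟩ : ℕ)) then 1 else 0) = bdes α := by
    rw [bdes_eq_sum]
    refine Finset.sum_congr rfl fun i hi => ?_
    rw [Finset.mem_range] at hi
    have h1 : i + 1 < n + 1 := by omega
    by_cases h2 : i + 1 < k
    · refine if_congr ⟨fun ⟨h, p⟩ => ⟨h2, ?_⟩, fun ⟨h, p⟩ => ⟨h1, ?_⟩⟩ rfl rfl
      · rw [glueFun_lt' hk α β (i + 1) h h2,
          glueFun_lt' hk α β i (Nat.lt_of_succ_lt h) (Nat.lt_of_succ_lt h2)] at p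
        omega
      · rw [glueFun_lt' hk α β (i + 1) h1 h,
          glueFun_lt' hk α β i (Nat.lt_of_succ_lt h1) (Nat.lt_of_succ_lt h)]
        omega
    · rw [if_neg, if_neg]
      · rintro ⟨h, p⟩
        exact h2 h
      · rintro ⟨h, p⟩
        rw [glueFun_eq' hk α β (i + 1) h (by omega),
          glueFun_lt' hk α β i (Nat.lt_of_succ_lt h) hi] at p
        have := (α ⟨i, hi⟩).isLt
        omega
  have Hj : (if (∃ h : k + 1 < n + 1, (glueFun hk α β ⟨k + 1, h⟩ : ℕ) + 1 <
      (glueFun hk α β ⟨k, Nat.lt_of_succ_lt h⟩ : ℕ)) then 1 else 0) = jnc n k β := by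
    by_cases hkn : k < n
    · simp only [jnc, dif_pos hkn]
      have h1 : k + 1 < n + 1 := by omega
      refine if_congr ⟨fun ⟨h, p⟩ => ?_, fun p => ⟨h1, ?_⟩⟩ rfl rfl
      · rw [glueFun_gt' hk α β (k + 1) 0 h (Nat.sub_pos_of_lt hkn) (by omega) (by omega),
          glueFun_eq' hk α β k (Nat.lt_of_succ_lt h) rfl] at p
        omega
      · rw [glueFun_gt' hk α β (k + 1) 0 h1 (Nat.sub_pos_of_lt hkn) (by omega) (by omega),
          glueFun_eq' hk α β k (Nat.lt_of_succ_lt h1) rfl]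
        omega
    · simp only [jnc, dif_neg hkn]
      rw [if_neg]
      rintro ⟨h, p⟩
      omega
  have Hβ : (∑ j ∈ Finset.range (n - k),
      if (∃ h : k + 1 + j + 1 < n + 1, (glueFun hk α β ⟨k + 1 + j + 1, h⟩ : ℕ) + 1 <
        (glueFun hk α β ⟨k + 1 + j, Nat.lt_of_succ_lt h⟩ : ℕ)) then 1 else 0) = bdes β := by
    rw [bdes_eq_sum]
    refine Finset.sum_congr rfl fun j hj => ?_
    rw [Finset.mem_range] at hj
    by_cases h2 : j + 1 < n - k
    · refine if_congr ⟨fun ⟨h, p⟩ => ⟨h2, ?_⟩, fun ⟨h, p⟩ => ⟨by omega, ?_⟩⟩ rfl rfl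
      · rw [glueFun_gt' hk α β (k + 1 + j + 1) (j + 1) h h2 (by omega) (by omega),
          glueFun_gt' hk α β (k + 1 + j) j (Nat.lt_of_succ_lt h) (Nat.lt_of_succ_lt h2)
            (by omega) (by omega)] at p
        exact p
      · rw [glueFun_gt' hk α β (k + 1 + j + 1) (j + 1) (by omega) h2 (by omega) (by omega),
          glueFun_gt' hk α β (k + 1 + j) j (by omega) (Nat.lt_of_succ_lt h2)
            (by omega) (by omega)]
        exact p
    · rw [if_neg, if_neg]
      · rintro ⟨h, p⟩
        exact h2 h
      · rintro ⟨h, p⟩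
        omega
  erw [Hα, Hj, Hβ]
  omega

lemma sep_left {n k : ℕ} (hk : k ≤ n) (π : Equiv.Perm (Fin (n + 1)))
    (hav : Avoids π perm132) (hmax : π ⟨k, Nat.lt_succ_of_le hk⟩ = ⟨n, n.lt_succ_self⟩) :
    ∀ i : Fin (n + 1), (i : ℕ) < k → n - k ≤ (π i : ℕ) := by
  intro i hi
  by_contra hsmall
  push_neg at hsmall
  have hex : ∃ j : Fin (n + 1), k < (j : ℕ) ∧ n - k ≤ (π j : ℕ) := by
    by_contra hno
    push_neg at hno
    have hpos : ∀ s : Fin (n - k + 1), k + (s : ℕ) < n + 1 := fun s => by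
      have := s.isLt; omega
    set u : Fin (n - k + 1) → ℕ := fun s =>
      if (s : ℕ) = 0 then (π i : ℕ) else (π ⟨k + s, hpos s⟩ : ℕ) with hu_def
    have hu : ∀ s, u s < n - k := by
      intro s
      by_cases h0 : (s : ℕ) = 0
      · rw [hu_def]
        simp only [if_pos h0]
        exact hsmall
      · rw [hu_def]
        simp only [if_neg h0]
        exact hno _ (by show k < k + (s : ℕ); omega)
    have ginj : Function.Injective (fun s => (⟨u s, hu s⟩ : Fin (n - k))) := by
      intro s s' h
      have huv : u s = u s' := congrArg Fin.val h
      simp only [hu_def] at huv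
      by_cases h0 : (s : ℕ) = 0 <;> by_cases h0' : (s' : ℕ) = 0
      · exact Fin.ext (by omega)
      · rw [if_pos h0, if_neg h0'] at huv
        have := congrArg Fin.val (π.injective (Fin.ext huv))
        simp at this
        omega
      · rw [if_neg h0, if_pos h0'] at huv
        have := congrArg Fin.val (π.injective (Fin.ext huv))
        simp at this
        omega
      · rw [if_neg h0, if_neg h0'] at huv
        have := congrArg Fin.val (π.injective (Fin.ext huv))
        simp at this
        exact Fin.ext (by omega)
    have := Fintype.card_le_of_injective _ ginj
    simp at this
  obtain ⟨j, hj1, hj2⟩ := hex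
  apply hav
  rw [contains132_iff]
  refine ⟨i, ⟨k, Nat.lt_succ_of_le hk⟩, j, by rw [Fin.lt_def]; exact hi,
    by rw [Fin.lt_def]; exact hj1, ?_, ?_⟩
  · rw [Fin.lt_def]; omega
  · rw [Fin.lt_def, hmax]
    have hne : (π j : ℕ) ≠ n := by
      intro hc
      have : π j = π ⟨k, Nat.lt_succ_of_le hk⟩ := by rw [hmax]; exact Fin.ext hc
      have := congrArg Fin.val (π.injective this)
      simp at this
      omega
    have := (π j).isLt
    show (π j : ℕ) < n
    omega

lemma sep_right {n k : ℕ} (hk : k ≤ n) (π : Equiv.Perm (Fin (n + 1)))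
    (hav : Avoids π perm132) (hmax : π ⟨k, Nat.lt_succ_of_le hk⟩ = ⟨n, n.lt_succ_self⟩) :
    ∀ j : Fin (n + 1), k < (j : ℕ) → (π j : ℕ) < n - k := by
  intro j hj
  by_contra hbig
  push_neg at hbig
  have hL := sep_left hk π hav hmax
  have hpos : ∀ s : Fin (k + 2), (s : ℕ) ≤ k → (s : ℕ) < n + 1 := fun s hs => by omega
  set u : Fin (k + 2) → ℕ := fun s =>
    if h : (s : ℕ) ≤ k then (π ⟨s, hpos s h⟩ : ℕ) - (n - k) else (π j : ℕ) - (n - k)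
    with hu_def
  have hularge : ∀ (s : Fin (k + 2)) (hs : (s : ℕ) ≤ k), n - k ≤ (π ⟨s, hpos s hs⟩ : ℕ) := by
    intro s hs
    rcases Nat.lt_or_ge (s : ℕ) k with h' | h'
    · exact hL ⟨s, hpos s hs⟩ h'
    · have hval : (s : ℕ) = k := by omega
      have he : (⟨(s : ℕ), hpos s hs⟩ : Fin (n + 1)) = ⟨k, Nat.lt_succ_of_le hk⟩ :=
        Fin.ext hval
      rw [he, hmax]
      exact Nat.sub_le n k
  have hu : ∀ s, u s < k + 1 := by
    intro s
    simp only [hu_def]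
    by_cases h : (s : ℕ) ≤ k
    · rw [dif_pos h]
      have := (π ⟨s, hpos s h⟩).isLt
      omega
    · rw [dif_neg h]
      have := (π j).isLt
      omega
  have ginj : Function.Injective (fun s => (⟨u s, hu s⟩ : Fin (k + 1))) := by
    intro s s' h
    have huv : u s = u s' := congrArg Fin.val h
    simp only [hu_def] at huv
    by_cases h0 : (s : ℕ) ≤ k <;> by_cases h0' : (s' : ℕ) ≤ k
    · rw [dif_pos h0, dif_pos h0'] at huv
      have b1 := hularge s h0
      have b2 := hularge s' h0'
      have : π ⟨s, hpos s h0⟩ = π ⟨s', hpos s' h0'⟩ := Fin.ext (by omega)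
      have := congrArg Fin.val (π.injective this)
      simp at this
      exact Fin.ext (by omega)
    · rw [dif_pos h0, dif_neg h0'] at huv
      have b1 := hularge s h0
      have : π ⟨s, hpos s h0⟩ = π j := Fin.ext (by omega)
      have := congrArg Fin.val (π.injective this)
      simp at this
      omega
    · rw [dif_neg h0, dif_pos h0'] at huv
      have b2 := hularge s' h0'
      have : π j = π ⟨s', hpos s' h0'⟩ := Fin.ext (by omega)
      have := congrArg Fin.val (π.injective this)
      simp at this
      omega
    · have hs := s.isLt
      have hs' := s'.isLt
      exact Fin.ext (by omega)
  have := Fintype.card_le_of_injective _ ginj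
  simp at this

lemma val_lt_n {n k : ℕ} (hk : k ≤ n) (π : Equiv.Perm (Fin (n + 1)))
    (hmax : π ⟨k, Nat.lt_succ_of_le hk⟩ = ⟨n, n.lt_succ_self⟩) :
    ∀ i : Fin (n + 1), (i : ℕ) ≠ k → (π i : ℕ) < n := by
  intro i hik
  have h1 := (π i).isLt
  rcases Nat.lt_or_ge (π i : ℕ) n with h | h
  · exact h
  · exfalso
    have : π i = π ⟨k, Nat.lt_succ_of_le hk⟩ := by
      rw [hmax]; exact Fin.ext (show (π i : ℕ) = n by omega)
    have := congrArg Fin.val (π.injective this)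
    simp at this
    exact hik this

noncomputable def unglueA {n k : ℕ} (hk : k ≤ n) (π : Equiv.Perm (Fin (n + 1)))
    (hav : Avoids π perm132) (hmax : π ⟨k, Nat.lt_succ_of_le hk⟩ = ⟨n, n.lt_succ_self⟩) :
    Equiv.Perm (Fin k) :=
  Equiv.ofBijective (fun i => ⟨(π ⟨i, by omega⟩ : ℕ) - (n - k), by
    have hs := sep_left hk π hav hmax ⟨i, by omega⟩ (by simpa using i.isLt)
    have hl := val_lt_n hk π hmax ⟨i, by omega⟩ (by have := i.isLt; simp; omega)
    omega⟩)
  (Finite.injective_iff_bijective.mp (by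
    intro i i' h
    have h' := congrArg Fin.val h
    simp only at h'
    have hs := sep_left hk π hav hmax ⟨i, by omega⟩ (by simpa using i.isLt)
    have hs' := sep_left hk π hav hmax ⟨i', by omega⟩ (by simpa using i'.isLt)
    have : π ⟨i, by omega⟩ = π ⟨i', by omega⟩ := Fin.ext (by omega)
    have := congrArg Fin.val (π.injective this)
    simp at this
    exact Fin.ext this))

noncomputable def unglueB {n k : ℕ} (hk : k ≤ n) (π : Equiv.Perm (Fin (n + 1)))
    (hav : Avoids π perm132) (hmax : π ⟨k, Nat.lt_succ_of_le hk⟩ = ⟨n, n.lt_succ_self⟩) :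
    Equiv.Perm (Fin (n - k)) :=
  Equiv.ofBijective (fun j => ⟨(π ⟨k + 1 + j, by have := j.isLt; omega⟩ : ℕ), by
    exact sep_right hk π hav hmax ⟨k + 1 + j, by have := j.isLt; omega⟩ (by simp; omega)⟩)
  (Finite.injective_iff_bijective.mp (by
    intro j j' h
    have h' := congrArg Fin.val h
    simp only at h'
    have : π ⟨k + 1 + j, by have := j.isLt; omega⟩ =
        π ⟨k + 1 + j', by have := j'.isLt; omega⟩ := Fin.ext h'
    have := congrArg Fin.val (π.injective this)
    simp at this
    exact Fin.ext (by omega)))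

lemma unglueA_val {n k : ℕ} (hk : k ≤ n) (π : Equiv.Perm (Fin (n + 1)))
    (hav : Avoids π perm132) (hmax : π ⟨k, Nat.lt_succ_of_le hk⟩ = ⟨n, n.lt_succ_self⟩)
    (i : Fin k) (hi : (i : ℕ) < n + 1) :
    (unglueA hk π hav hmax i : ℕ) = (π ⟨i, hi⟩ : ℕ) - (n - k) := rfl

lemma unglueB_val {n k : ℕ} (hk : k ≤ n) (π : Equiv.Perm (Fin (n + 1)))
    (hav : Avoids π perm132) (hmax : π ⟨k, Nat.lt_succ_of_le hk⟩ = ⟨n, n.lt_succ_self⟩)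
    (j : Fin (n - k)) (hj : k + 1 + (j : ℕ) < n + 1) :
    (unglueB hk π hav hmax j : ℕ) = (π ⟨k + 1 + j, hj⟩ : ℕ) := rfl

lemma glue_unglue {n k : ℕ} (hk : k ≤ n) (π : Equiv.Perm (Fin (n + 1)))
    (hav : Avoids π perm132) (hmax : π ⟨k, Nat.lt_succ_of_le hk⟩ = ⟨n, n.lt_succ_self⟩) :
    glue hk (unglueA hk π hav hmax) (unglueB hk π hav hmax) = π := by
  apply Equiv.ext
  intro i
  apply Fin.ext
  rw [glue_apply]
  rcases lt_trichotomy (i : ℕ) k with h | h | h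
  · rw [glueFun_lt hk _ _ h]
    have hi : (i : ℕ) < n + 1 := i.isLt
    rw [unglueA_val hk π hav hmax ⟨i, h⟩ hi]
    have hs := sep_left hk π hav hmax ⟨(i : ℕ), hi⟩ h
    have : (⟨(i : ℕ), hi⟩ : Fin (n + 1)) = i := Fin.ext rfl
    rw [this] at hs ⊢
    omega
  · rw [glueFun_eq hk _ _ h]
    have : i = ⟨k, Nat.lt_succ_of_le hk⟩ := Fin.ext h
    rw [this, hmax]
  · have h' : (i : ℕ) - k - 1 < n - k := by have := i.isLt; omega
    rw [glueFun_gt hk _ _ h h']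
    rw [unglueB_val hk π hav hmax ⟨(i : ℕ) - k - 1, h'⟩
      (show k + 1 + ((i : ℕ) - k - 1) < n + 1 by have := i.isLt; omega)]
    exact congrArg (fun z => (π z : ℕ))
      (Fin.ext (show k + 1 + ((i : ℕ) - k - 1) = (i : ℕ) by omega))

lemma glue_max {n k : ℕ} (hk : k ≤ n) (α : Equiv.Perm (Fin k)) (β : Equiv.Perm (Fin (n - k))) :
    glue hk α β ⟨k, Nat.lt_succ_of_le hk⟩ = ⟨n, n.lt_succ_self⟩ := by
  apply Fin.ext
  rw [glue_apply]
  exact glueFun_eq' hk α β k (Nat.lt_succ_of_le hk) rfl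

lemma glue_pair_inj {n k : ℕ} (hk : k ≤ n) (α α' : Equiv.Perm (Fin k))
    (β β' : Equiv.Perm (Fin (n - k))) (h : glue hk α β = glue hk α' β') : α = α' ∧ β = β' := by
  constructor
  · apply Equiv.ext
    intro i
    apply Fin.ext
    have hi : (i : ℕ) < n + 1 := by have := i.isLt; omega
    have := congrArg (fun σ : Equiv.Perm (Fin (n + 1)) => (σ ⟨i, hi⟩ : ℕ)) h
    simp only [glue_apply] at this
    rw [glueFun_lt' hk α β i hi i.isLt, glueFun_lt' hk α' β' i hi i.isLt] at this
    simp only [Fin.eta] at this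
    omega
  · apply Equiv.ext
    intro j
    apply Fin.ext
    have hj : k + 1 + (j : ℕ) < n + 1 := by have := j.isLt; omega
    have := congrArg (fun σ : Equiv.Perm (Fin (n + 1)) => (σ ⟨k + 1 + j, hj⟩ : ℕ)) h
    simp only [glue_apply] at this
    rw [glueFun_gt' hk α β (k + 1 + j) j hj j.isLt (by omega) (by omega),
      glueFun_gt' hk α' β' (k + 1 + j) j hj j.isLt (by omega) (by omega)] at this
    exact this

lemma glue_avoids_iff {n k : ℕ} (hk : k ≤ n) (α : Equiv.Perm (Fin k))
    (β : Equiv.Perm (Fin (n - k))) :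
    Avoids (glue hk α β) perm132 ↔ (Avoids α perm132 ∧ Avoids β perm132) := by
  unfold Avoids
  rw [glue_contains_iff]
  tauto

lemma block_sum {n k : ℕ} (hk : k ≤ n) :
    (∑ π ∈ Finset.univ.filter (fun π : Equiv.Perm (Fin (n + 1)) =>
        Avoids π perm132 ∧ π ⟨k, Nat.lt_succ_of_le hk⟩ = ⟨n, n.lt_succ_self⟩),
      (Polynomial.X : Polynomial ℤ) ^ bdes π) =
    ∑ p ∈ (Finset.univ.filter (fun α : Equiv.Perm (Fin k) => Avoids α perm132)) ×ˢ
          (Finset.univ.filter (fun β : Equiv.Perm (Fin (n - k)) => Avoids β perm132)),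
      (Polynomial.X : Polynomial ℤ) ^ (bdes p.1 + bdes p.2 + jnc n k p.2) := by
  refine Finset.sum_bij'
    (i := fun π hπ => (unglueA hk π (Finset.mem_filter.mp hπ).2.1 (Finset.mem_filter.mp hπ).2.2,
      unglueB hk π (Finset.mem_filter.mp hπ).2.1 (Finset.mem_filter.mp hπ).2.2))
    (j := fun p _ => glue hk p.1 p.2) ?_ ?_ ?_ ?_ ?_
  · intro π hπ
    obtain ⟨-, hav, hmax⟩ := Finset.mem_filter.mp hπ
    rw [Finset.mem_product]
    constructor <;> rw [Finset.mem_filter]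
    · refine ⟨Finset.mem_univ _, fun hc => hav ?_⟩
      rw [← glue_unglue hk π hav hmax]
      rw [glue_contains_iff]
      exact Or.inl hc
    · refine ⟨Finset.mem_univ _, fun hc => hav ?_⟩
      rw [← glue_unglue hk π hav hmax]
      rw [glue_contains_iff]
      exact Or.inr hc
  · intro p hp
    rw [Finset.mem_product] at hp
    obtain ⟨h1, h2⟩ := hp
    rw [Finset.mem_filter] at h1 h2
    rw [Finset.mem_filter]
    exact ⟨Finset.mem_univ _, (glue_avoids_iff hk p.1 p.2).mpr ⟨h1.2, h2.2⟩, glue_max hk p.1 p.2⟩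
  · intro π hπ
    obtain ⟨-, hav, hmax⟩ := Finset.mem_filter.mp hπ
    exact glue_unglue hk π hav hmax
  · intro p hp
    have hav : Avoids (glue hk p.1 p.2) perm132 := by
      rw [Finset.mem_product] at hp
      exact (glue_avoids_iff hk p.1 p.2).mpr ⟨(Finset.mem_filter.mp hp.1).2,
        (Finset.mem_filter.mp hp.2).2⟩
    have hmax := glue_max hk p.1 p.2
    have := glue_unglue hk (glue hk p.1 p.2) hav hmax
    obtain ⟨e1, e2⟩ := glue_pair_inj hk _ p.1 _ p.2 this
    exact Prod.ext e1 e2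
  · intro π hπ
    obtain ⟨-, hav, hmax⟩ := Finset.mem_filter.mp hπ
    congr 1
    conv_lhs => rw [← glue_unglue hk π hav hmax]
    exact bdes_glue hk _ _

noncomputable def bpoly (n : ℕ) : Polynomial ℤ :=
  ∑ π ∈ Finset.univ.filter (fun π : Equiv.Perm (Fin n) => Avoids π perm132),
    Polynomial.X ^ bdes π

def Pmax {n : ℕ} (π : Equiv.Perm (Fin n)) : Prop :=
  ∀ i : Fin n, π i ≤ π ⟨0, i.pos⟩

noncomputable def mpoly (n : ℕ) : Polynomial ℤ :=
  ∑ π ∈ Finset.univ.filter (fun π : Equiv.Perm (Fin n) => Avoids π perm132 ∧ Pmax π),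
    Polynomial.X ^ bdes π

noncomputable def Jpoly (n k : ℕ) : Polynomial ℤ :=
  ∑ β ∈ Finset.univ.filter (fun β : Equiv.Perm (Fin (n - k)) => Avoids β perm132),
    Polynomial.X ^ (bdes β + jnc n k β)

lemma avoids_of_zero {m : ℕ} (hm : m = 0) (π : Equiv.Perm (Fin m)) : Avoids π perm132 := by
  rintro ⟨f, -, -⟩
  have := (f 0).isLt
  omega

lemma bdes_of_zero {m : ℕ} (hm : m = 0) (π : Equiv.Perm (Fin m)) : bdes π = 0 := by
  rw [bdes, Finset.card_eq_zero, Finset.filter_eq_empty_iff]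
  intro k hk
  rw [Finset.mem_range] at hk
  rintro ⟨h, -⟩
  omega

lemma card_perm_zero {m : ℕ} (hm : m = 0) :
    (Finset.univ.filter (fun π : Equiv.Perm (Fin m) => Avoids π perm132)) = Finset.univ ∧
    (Finset.univ : Finset (Equiv.Perm (Fin m))).card = 1 := by
  constructor
  · exact Finset.filter_true_of_mem (fun π _ => avoids_of_zero hm π)
  · rw [Finset.card_univ, Fintype.card_perm, Fintype.card_fin, hm]
    rfl

lemma bpoly_zero' {m : ℕ} (hm : m = 0) :
    (∑ π ∈ Finset.univ.filter (fun π : Equiv.Perm (Fin m) => Avoids π perm132),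
      (Polynomial.X : Polynomial ℤ) ^ bdes π) = 1 := by
  obtain ⟨h1, h2⟩ := card_perm_zero hm
  rw [h1]
  rw [Finset.sum_congr rfl (fun π _ => by rw [bdes_of_zero hm π, pow_zero])]
  rw [Finset.sum_const, h2, one_smul]

lemma bpoly_zero : bpoly 0 = 1 := bpoly_zero' rfl

lemma mpoly_zero : mpoly 0 = 1 := by
  rw [mpoly]
  have h1 : (Finset.univ.filter (fun π : Equiv.Perm (Fin 0) => Avoids π perm132 ∧ Pmax π)) =
      Finset.univ := by
    apply Finset.filter_true_of_mem
    intro π _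
    exact ⟨avoids_of_zero rfl π, fun i => absurd i.isLt (by omega)⟩
  rw [h1]
  rw [Finset.sum_congr rfl (fun π _ => by rw [bdes_of_zero rfl π, pow_zero])]
  rw [Finset.sum_const, (card_perm_zero rfl).2, one_smul]

lemma pmax_iff {n : ℕ} (π : Equiv.Perm (Fin (n + 1))) :
    Pmax π ↔ π ⟨0, Nat.lt_succ_of_le (Nat.zero_le n)⟩ = ⟨n, n.lt_succ_self⟩ := by
  constructor
  · intro h
    have hs := π.apply_symm_apply ⟨n, n.lt_succ_self⟩
    have hle := h (π.symm ⟨n, n.lt_succ_self⟩)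
    rw [hs] at hle
    rw [Fin.le_def] at hle
    apply Fin.ext
    have := (π ⟨0, Nat.lt_succ_of_le (Nat.zero_le n)⟩).isLt
    show (π ⟨0, Nat.lt_succ_of_le (Nat.zero_le n)⟩ : ℕ) = n
    have he : (π ⟨0, (π.symm ⟨n, n.lt_succ_self⟩).pos⟩ : ℕ) =
        (π ⟨0, Nat.lt_succ_of_le (Nat.zero_le n)⟩ : ℕ) := rfl
    have hn : ((⟨n, n.lt_succ_self⟩ : Fin (n + 1)) : ℕ) = n := rfl
    omega
  · intro h i
    rw [Fin.le_def]
    have : (π ⟨0, i.pos⟩ : ℕ) = n := by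
      have he : π ⟨0, i.pos⟩ = π ⟨0, Nat.lt_succ_of_le (Nat.zero_le n)⟩ := rfl
      rw [he, h]
    rw [this]
    exact Nat.lt_succ_iff.mp (π i).isLt

lemma not_pmax_val {n : ℕ} (π : Equiv.Perm (Fin (n + 1))) (h : ¬ Pmax π) :
    (π ⟨0, Nat.lt_succ_of_le (Nat.zero_le n)⟩ : ℕ) < n := by
  rw [pmax_iff] at h
  have h2 := (π ⟨0, Nat.lt_succ_of_le (Nat.zero_le n)⟩).isLt
  rcases Nat.lt_or_ge (π ⟨0, Nat.lt_succ_of_le (Nat.zero_le n)⟩ : ℕ) n with h' | h'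
  · exact h'
  · exact absurd (Fin.ext (show (π ⟨0, Nat.lt_succ_of_le (Nat.zero_le n)⟩ : ℕ) = n by omega)) h

lemma Jpoly_zero (n : ℕ) :
    Jpoly n 0 = (1 - Polynomial.X) * mpoly n + Polynomial.X * bpoly n := by
  cases n with
  | zero =>
    show (∑ β ∈ Finset.univ.filter (fun β : Equiv.Perm (Fin 0) => Avoids β perm132),
        (Polynomial.X : Polynomial ℤ) ^ (bdes β + jnc 0 0 β)) = _
    rw [Finset.sum_congr rfl (fun β _ => by
      rw [bdes_of_zero rfl β, jnc, dif_neg (lt_irrefl 0), pow_zero])]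
    obtain ⟨h1, h2⟩ := card_perm_zero (rfl : (0 : ℕ) = 0)
    rw [h1, Finset.sum_const, h2, one_smul, mpoly_zero, bpoly_zero]
    ring
  | succ j =>
    show (∑ β ∈ Finset.univ.filter (fun β : Equiv.Perm (Fin (j + 1)) => Avoids β perm132),
        (Polynomial.X : Polynomial ℤ) ^ (bdes β + jnc (j + 1) 0 β)) = _
    rw [← Finset.sum_filter_add_sum_filter_not
      (Finset.univ.filter (fun β : Equiv.Perm (Fin (j + 1)) => Avoids β perm132)) Pmax]
    have hpos : (0 : ℕ) < j + 1 := Nat.succ_pos j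
    have hp1 : ∀ β ∈ (Finset.univ.filter
        (fun β : Equiv.Perm (Fin (j + 1)) => Avoids β perm132)).filter Pmax,
        (Polynomial.X : Polynomial ℤ) ^ (bdes β + jnc (j + 1) 0 β) =
        Polynomial.X ^ bdes β := by
      intro β hβ
      rw [Finset.mem_filter] at hβ
      have hm : Pmax β := hβ.2
      rw [pmax_iff] at hm
      have hval : (β ⟨0, Nat.sub_pos_of_lt hpos⟩ : ℕ) = j := congrArg Fin.val hm
      rw [jnc, dif_pos hpos, if_neg (by omega), Nat.add_zero]
    have hp2 : ∀ β ∈ (Finset.univ.filter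
        (fun β : Equiv.Perm (Fin (j + 1)) => Avoids β perm132)).filter (fun β => ¬ Pmax β),
        (Polynomial.X : Polynomial ℤ) ^ (bdes β + jnc (j + 1) 0 β) =
        Polynomial.X ^ bdes β * Polynomial.X := by
      intro β hβ
      rw [Finset.mem_filter] at hβ
      have hval : (β ⟨0, Nat.sub_pos_of_lt hpos⟩ : ℕ) < j := not_pmax_val β hβ.2
      rw [jnc, dif_pos hpos, if_pos (by omega), pow_add, pow_one]
    rw [Finset.sum_congr rfl hp1, Finset.sum_congr rfl hp2]
    rw [← Finset.sum_mul]
    have hsplit := Finset.sum_filter_add_sum_filter_not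
      (Finset.univ.filter (fun β : Equiv.Perm (Fin (j + 1)) => Avoids β perm132)) Pmax
      (fun β => (Polynomial.X : Polynomial ℤ) ^ bdes β)
    have hmm : (∑ β ∈ (Finset.univ.filter
        (fun β : Equiv.Perm (Fin (j + 1)) => Avoids β perm132)).filter Pmax,
        (Polynomial.X : Polynomial ℤ) ^ bdes β) = mpoly (j + 1) := by
      rw [Finset.filter_filter]
      rfl
    have hb : (∑ β ∈ Finset.univ.filter
        (fun β : Equiv.Perm (Fin (j + 1)) => Avoids β perm132),
        (Polynomial.X : Polynomial ℤ) ^ bdes β) = bpoly (j + 1) := rfl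
    rw [hmm, hb] at hsplit
    rw [hmm]
    have : (∑ β ∈ (Finset.univ.filter
        (fun β : Equiv.Perm (Fin (j + 1)) => Avoids β perm132)).filter (fun β => ¬ Pmax β),
        (Polynomial.X : Polynomial ℤ) ^ bdes β) = bpoly (j + 1) - mpoly (j + 1) := by
      rw [← hsplit]; ring
    rw [this]
    ring

lemma Jpoly_mid {n k : ℕ} (h0 : 0 < k) (hn : k < n) :
    Jpoly n k = bpoly (n - k) * Polynomial.X := by
  rw [Jpoly, bpoly, Finset.sum_mul]
  refine Finset.sum_congr rfl fun β _ => ?_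
  have hval := (β ⟨0, Nat.sub_pos_of_lt hn⟩).isLt
  rw [jnc, dif_pos hn, if_pos (by omega), pow_add, pow_one]

lemma Jpoly_last (n : ℕ) : Jpoly n n = 1 := by
  rw [Jpoly]
  have hz : n - n = 0 := Nat.sub_self n
  rw [Finset.sum_congr rfl (fun β _ => by
    rw [bdes_of_zero hz β, jnc, dif_neg (lt_irrefl n), pow_zero])]
  obtain ⟨h1, h2⟩ := card_perm_zero hz
  rw [h1, Finset.sum_const, h2, one_smul]

lemma mpoly_succ (n : ℕ) :
    mpoly (n + 1) = (1 - Polynomial.X) * mpoly n + Polynomial.X * bpoly n := by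
  have hcong : Finset.univ.filter
      (fun π : Equiv.Perm (Fin (n + 1)) => Avoids π perm132 ∧ Pmax π) =
      Finset.univ.filter (fun π : Equiv.Perm (Fin (n + 1)) => Avoids π perm132 ∧
        π ⟨0, Nat.lt_succ_of_le (Nat.zero_le n)⟩ = ⟨n, n.lt_succ_self⟩) := by
    apply Finset.filter_congr
    intro π _
    rw [pmax_iff]
  rw [mpoly, hcong]
  rw [block_sum (Nat.zero_le n)]
  rw [Finset.sum_product]
  have hinner : ∀ α : Equiv.Perm (Fin 0),
      (∑ β ∈ Finset.univ.filter (fun β : Equiv.Perm (Fin (n - 0)) => Avoids β perm132),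
        (Polynomial.X : Polynomial ℤ) ^ (bdes (α, β).1 + bdes (α, β).2 + jnc n 0 (α, β).2)) =
      Jpoly n 0 := by
    intro α
    rw [Jpoly]
    refine Finset.sum_congr rfl fun β _ => ?_
    rw [bdes_of_zero rfl α]
    norm_num
  rw [Finset.sum_congr rfl (fun α _ => hinner α)]
  obtain ⟨h1, h2⟩ := card_perm_zero (rfl : (0 : ℕ) = 0)
  rw [h1, Finset.sum_const, h2, one_smul, Jpoly_zero]

lemma bpoly_succ (n : ℕ) :
    bpoly (n + 1) = ∑ k ∈ Finset.range (n + 1), bpoly k * Jpoly n k := by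
  rw [bpoly]
  rw [← Finset.sum_fiberwise_of_maps_to
    (g := fun π : Equiv.Perm (Fin (n + 1)) => (π.symm ⟨n, n.lt_succ_self⟩ : ℕ))
    (t := Finset.range (n + 1))
    (fun π _ => Finset.mem_range.mpr (π.symm ⟨n, n.lt_succ_self⟩).isLt)]
  refine Finset.sum_congr rfl fun k hk => ?_
  rw [Finset.mem_range] at hk
  have hk' : k ≤ n := by omega
  have hcong : (Finset.univ.filter
      (fun π : Equiv.Perm (Fin (n + 1)) => Avoids π perm132)).filter
      (fun π => (π.symm ⟨n, n.lt_succ_self⟩ : ℕ) = k) =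
      Finset.univ.filter (fun π : Equiv.Perm (Fin (n + 1)) => Avoids π perm132 ∧
        π ⟨k, Nat.lt_succ_of_le hk'⟩ = ⟨n, n.lt_succ_self⟩) := by
    rw [Finset.filter_filter]
    apply Finset.filter_congr
    intro π _
    constructor
    · rintro ⟨hav, hsym⟩
      refine ⟨hav, ?_⟩
      have : π.symm ⟨n, n.lt_succ_self⟩ = ⟨k, Nat.lt_succ_of_le hk'⟩ := Fin.ext hsym
      rw [← this, Equiv.apply_symm_apply]
    · rintro ⟨hav, happ⟩
      refine ⟨hav, ?_⟩
      rw [← happ, Equiv.symm_apply_apply]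
  rw [hcong, block_sum hk', Finset.sum_product]
  rw [bpoly, Finset.sum_mul]
  refine Finset.sum_congr rfl fun α _ => ?_
  rw [Jpoly, Finset.mul_sum]
  refine Finset.sum_congr rfl fun β _ => ?_
  rw [← pow_add]
  ring_nf

noncomputable def cpoly (k : ℕ) : Polynomial ℤ :=
  bpoly k - (if k = 0 then 1 else 0)

lemma cpoly_zero : cpoly 0 = 0 := by simp [cpoly, bpoly_zero]

lemma cpoly_of_ne {k : ℕ} (h : k ≠ 0) : cpoly k = bpoly k := by simp [cpoly, h]

lemma R1 (n : ℕ) :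
    bpoly (n + 1) + (if n = 0 then 1 else 0) =
      bpoly n + ((1 - Polynomial.X) * mpoly n + Polynomial.X * bpoly n) +
      Polynomial.X * ∑ k ∈ Finset.range (n + 1), cpoly k * cpoly (n - k) := by
  cases n with
  | zero =>
    rw [bpoly_succ 0, Finset.sum_range_one, Finset.sum_range_one, Jpoly_zero,
      bpoly_zero, mpoly_zero, cpoly_zero]
    norm_num
  | succ j =>
    rw [bpoly_succ (j + 1), Finset.sum_range_succ', Finset.sum_range_succ]
    have hmid : ∀ k ∈ Finset.range j,
        bpoly (k + 1) * Jpoly (j + 1) (k + 1) = bpoly (k + 1) * bpoly (j - k) * Polynomial.X := by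
      intro k hk
      rw [Finset.mem_range] at hk
      rw [Jpoly_mid (Nat.succ_pos k) (by omega)]
      rw [show j + 1 - (k + 1) = j - k by omega]
      ring
    rw [Finset.sum_congr rfl hmid, Jpoly_last, Jpoly_zero, bpoly_zero]
    have hrhs : (∑ k ∈ Finset.range (j + 1 + 1), cpoly k * cpoly (j + 1 - k)) =
        ∑ k ∈ Finset.range j, bpoly (k + 1) * bpoly (j - k) := by
      rw [Finset.sum_range_succ, Finset.sum_range_succ']
      rw [show j + 1 - (j + 1) = 0 by omega, cpoly_zero, mul_zero, add_zero, zero_mul, add_zero]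
      refine Finset.sum_congr rfl fun k hk => ?_
      rw [Finset.mem_range] at hk
      rw [cpoly_of_ne (Nat.succ_ne_zero k), show j + 1 - (k + 1) = j - k by omega,
        cpoly_of_ne (by omega)]
    rw [hrhs, Finset.mul_sum]
    rw [if_neg (Nat.succ_ne_zero j)]
    rw [Finset.sum_congr rfl (fun k _ => by
      show bpoly (k + 1) * bpoly (j - k) * Polynomial.X =
        Polynomial.X * (bpoly (k + 1) * bpoly (j - k))
      ring)]
    ring

noncomputable def M132 : PowerSeries (Polynomial ℤ) := PowerSeries.mk mpoly

lemma B132_eq : B132 = PowerSeries.mk bpoly := rfl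

lemma coeff_B132 (n : ℕ) : PowerSeries.coeff n B132 = bpoly n := by
  rw [B132_eq, PowerSeries.coeff_mk]

lemma coeff_M132 (n : ℕ) : PowerSeries.coeff n M132 = mpoly n := by
  rw [M132, PowerSeries.coeff_mk]

lemma coeff_Bm1 (n : ℕ) : PowerSeries.coeff n (B132 - 1) = cpoly n := by
  rw [map_sub, coeff_B132, PowerSeries.coeff_one, cpoly]

lemma one_sub_T : (1 : PowerSeries (Polynomial ℤ)) - PowerSeries.C Polynomial.X =
    PowerSeries.C (1 - Polynomial.X) := by
  rw [map_sub, map_one]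

lemma E2 : M132 = 1 + PowerSeries.X *
    ((1 - PowerSeries.C Polynomial.X) * M132 +
      PowerSeries.C Polynomial.X * B132) := by
  apply PowerSeries.ext
  intro n
  cases n with
  | zero =>
    simp only [coeff_M132, map_add, PowerSeries.coeff_one, PowerSeries.coeff_zero_X_mul,
      mpoly_zero]
    norm_num
  | succ n =>
    rw [coeff_M132, map_add, PowerSeries.coeff_one, PowerSeries.coeff_succ_X_mul,
      map_add, one_sub_T, PowerSeries.coeff_C_mul, PowerSeries.coeff_C_mul,
      coeff_M132, coeff_B132, mpoly_succ]
    simp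

lemma E1 : B132 = PowerSeries.X * B132 + M132 - PowerSeries.X +
    (PowerSeries.C Polynomial.X * PowerSeries.X) * (B132 - 1) ^ 2 := by
  apply PowerSeries.ext
  intro n
  rw [mul_assoc, coeff_B132, map_add, map_sub, map_add, coeff_M132]
  cases n with
  | zero =>
    rw [PowerSeries.coeff_zero_X_mul, PowerSeries.coeff_C_mul, PowerSeries.coeff_zero_X_mul,
      mpoly_zero, bpoly_zero]
    simp
  | succ n =>
    rw [PowerSeries.coeff_succ_X_mul, coeff_B132, PowerSeries.coeff_X]
    have hsq : PowerSeries.coeff (n + 1)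
        (PowerSeries.C Polynomial.X * (PowerSeries.X * (B132 - 1) ^ 2)) =
        Polynomial.X * ∑ k ∈ Finset.range (n + 1), cpoly k * cpoly (n - k) := by
      rw [PowerSeries.coeff_C_mul, PowerSeries.coeff_succ_X_mul, sq, PowerSeries.coeff_mul,
        Finset.Nat.sum_antidiagonal_eq_sum_range_succ_mk]
      simp only [coeff_Bm1]
    rw [hsq]
    have hr := R1 n
    have hms := mpoly_succ n
    rcases Nat.eq_zero_or_pos n with h0 | h0
    · subst h0
      rw [if_pos rfl] at hr
      rw [if_pos rfl]
      linear_combination hr - hms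
    · rw [if_neg (by omega)] at hr
      rw [if_neg (by omega)]
      linear_combination hr - hms

/-- The algebraic (squared) form of the closed formula for `B(t,x;132)`:
`((1 − 2(1−t)x + (1−t)(1−2t)x²) − 2tx(1 − (1−t)x)·B)²
  = 1 − 4x + 6(1−t)x² − 4(1−t)²x³ + (1−t)²x⁴`. -/
theorem genfun_avoids132_algebraic :
    letI X : PowerSeries (Polynomial ℤ) := PowerSeries.X
    letI T : PowerSeries (Polynomial ℤ) := PowerSeries.C Polynomial.X
    ((1 - 2 * (1 - T) * X + (1 - T) * (1 - 2 * T) * X ^ 2) -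
        2 * T * X * (1 - (1 - T) * X) * B132) ^ 2 =
      1 - 4 * X + 6 * (1 - T) * X ^ 2 - 4 * (1 - T) ^ 2 * X ^ 3 + (1 - T) ^ 2 * X ^ 4 := by
  show ((1 - 2 * (1 - PowerSeries.C Polynomial.X) * PowerSeries.X +
      (1 - PowerSeries.C Polynomial.X) *
        (1 - 2 * PowerSeries.C Polynomial.X) * PowerSeries.X ^ 2) -
      2 * PowerSeries.C Polynomial.X * PowerSeries.X *
        (1 - (1 - PowerSeries.C Polynomial.X) * PowerSeries.X) * B132) ^ 2 =
    1 - 4 * PowerSeries.X + 6 * (1 - PowerSeries.C Polynomial.X) *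
      PowerSeries.X ^ 2 -
      4 * (1 - PowerSeries.C Polynomial.X) ^ 2 * PowerSeries.X ^ 3 +
      (1 - PowerSeries.C Polynomial.X) ^ 2 * PowerSeries.X ^ 4
  linear_combination
    ((-4 : PowerSeries (Polynomial ℤ)) * PowerSeries.C Polynomial.X *
      PowerSeries.X *
      (1 - (1 - PowerSeries.C Polynomial.X) * PowerSeries.X) *
      (1 - (1 - PowerSeries.C Polynomial.X) * PowerSeries.X)) * E1 +
    ((-4 : PowerSeries (Polynomial ℤ)) * PowerSeries.C Polynomial.X *
      PowerSeries.X *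
      (1 - (1 - PowerSeries.C Polynomial.X) * PowerSeries.X)) * E2
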